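/- arXiv:2303.13737 — 2 statements merged into one kernel-verified Lean document; each statement's English description precedes it below -/
import Mathlib

section
/- Let 𝒮 and 𝒯 be compact subsets of ℝ, let μ be a finite measure on 𝒯 and ν a finite measure on 𝒮, and let K : 𝒯 × 𝒮 → ℝ be continuous with d(s) := ∫_𝒯 |K(t,s)| μ(dt) > 0 for all s ∈ 𝒮; let ρ be the measure on 𝒮 with density dρ/dν = d/Z where Z = ∫_𝒮 d dν. Then for every y ∈ L²_μ(𝒯) there exists a unique φ^y ∈ L²_ρ(𝒮) such that ⟨φ^y, ψ⟩_{L²_ρ} = ⟨L_K ψ, y⟩_{L²_μ} for all ψ ∈ L²_ρ(𝒮), where (L_K ψ)(t) = ∫_𝒮 K(t,s) ψ(s) ν(ds). -/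
open MeasureTheory
open scoped RealInnerProductSpace ENNReal

/-- Riesz representation for the Fredholm inverse problem: for every `y ∈ L²_μ(𝒯)` there is a
unique `φ^y ∈ L²_ρ(𝒮)` with `⟨φ^y, ψ⟩_{L²_ρ} = ⟨L_K ψ, y⟩_{L²_μ}` for all `ψ`. -/
theorem exists_unique_riesz_representative
    (S T : Set ℝ) (hScomp : IsCompact S) (hTcomp : IsCompact T)
    (μ : Measure T) (ν : Measure S) [IsFiniteMeasure μ] [IsFiniteMeasure ν]
    (K : T × S → ℝ) (hK : Continuous K)
    (d : S → ℝ) (hd : ∀ s : S, d s = ∫ t : T, |K (t, s)| ∂μ)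
    (hdpos : ∀ s : S, 0 < d s)
    (Z : ℝ) (hZ : Z = ∫ s : S, d s ∂ν)
    (ρ : Measure S) (hρ : ρ = ν.withDensity fun s => ENNReal.ofReal (d s / Z)) :
    ∀ y : Lp ℝ 2 μ, ∃! φy : Lp ℝ 2 ρ,
      ∀ ψ : Lp ℝ 2 ρ, ⟪φy, ψ⟫ = ∫ t : T, (∫ s : S, K (t, s) * ψ s ∂ν) * y t ∂μ := by
  haveI : CompactSpace S := isCompact_iff_compactSpace.mp hScomp
  haveI : CompactSpace T := isCompact_iff_compactSpace.mp hTcomp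
  intro y
  -- a uniform bound on |K|
  obtain ⟨M, hM⟩ : ∃ M : ℝ, ∀ p : T × S, ‖K p‖ ≤ M := by
    obtain ⟨M, hM⟩ := isCompact_univ.exists_bound_of_continuousOn hK.continuousOn
    exact ⟨M, fun p => hM p (Set.mem_univ p)⟩
  have hM0 : ∀ p : T × S, |K p| ≤ M := fun p => hM p
  -- continuity of d
  have hdc : Continuous d := by
    have : Continuous fun s : S => ∫ t : T, |K (t, s)| ∂μ := by
      apply continuous_of_dominated (bound := fun _ => M)
      · intro s
        exact ((hK.comp (continuous_id.prodMk continuous_const)).abs).aestronglyMeasurable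
      · intro s
        filter_upwards with t
        simpa using hM0 (t, s)
      · exact integrable_const M
      · filter_upwards with t
        exact (hK.comp (continuous_const.prodMk continuous_id)).abs
    have hde : d = fun s : S => ∫ t : T, |K (t, s)| ∂μ := funext hd
    rw [hde]; exact this
  -- positive lower bound on d
  obtain ⟨δ, hδpos, hδ⟩ : ∃ δ : ℝ, 0 < δ ∧ ∀ s : S, δ ≤ d s := by
    rcases isEmpty_or_nonempty S with h | h
    · exact ⟨1, one_pos, fun s => isEmptyElim s⟩
    · obtain ⟨s₀, -, hs₀⟩ := isCompact_univ.exists_isMinOn Set.univ_nonempty hdc.continuousOn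
      exact ⟨d s₀, hdpos s₀, fun s => hs₀ (Set.mem_univ s)⟩
  -- d is integrable
  have hdint : Integrable d ν := by
    refine memLp_one_iff_integrable.mp ?_
    refine MemLp.mono_exponent ?_ (le_top : (1 : ℝ≥0∞) ≤ ⊤)
    refine memLp_top_of_bound hdc.aestronglyMeasurable (M * (μ Set.univ).toReal) ?_
    filter_upwards with s
    rw [hd s, Real.norm_eq_abs]
    calc |∫ t : T, |K (t, s)| ∂μ| = ‖∫ t : T, |K (t, s)| ∂μ‖ := rfl
      _ ≤ M * (μ Set.univ).toReal := by
          apply norm_integral_le_of_norm_le_const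
          filter_upwards with t
          simpa using hM0 (t, s)
  have hZ0 : 0 ≤ Z := by
    rw [hZ]
    exact integral_nonneg fun s => (hdpos s).le
  rcases hZ0.lt_or_eq with hZpos | hZzero
  · -- main case Z > 0
    have hdne : ∀ s : S, d s ≠ 0 := fun s => (hdpos s).ne'
    have hdub : ∀ s : S, d s ≤ M * (μ Set.univ).toReal := by
      intro s
      rw [hd s]
      have : ‖∫ t : T, |K (t, s)| ∂μ‖ ≤ M * (μ Set.univ).toReal := by
        apply norm_integral_le_of_norm_le_const
        filter_upwards with t
        simpa using hM0 (t, s)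
      exact (le_abs_self _).trans this
    haveI hρfin : IsFiniteMeasure ρ := by
      refine ⟨?_⟩
      rw [hρ, withDensity_apply _ MeasurableSet.univ]
      calc ∫⁻ s in Set.univ, ENNReal.ofReal (d s / Z) ∂ν
          ≤ ∫⁻ _ in Set.univ, ENNReal.ofReal (M * (μ Set.univ).toReal / Z) ∂ν := by
            apply lintegral_mono
            intro s
            exact ENNReal.ofReal_le_ofReal (by
              apply div_le_div_of_nonneg_right (hdub s) hZpos.le)
        _ < ⊤ := by
            rw [setLIntegral_const]
            exact ENNReal.mul_lt_top ENNReal.ofReal_lt_top (measure_lt_top _ _)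
    have hy1 : Integrable (⇑y) μ := (Lp.memLp y).integrable one_le_two
    set g : S → ℝ := fun s => ∫ t : T, K (t, s) * y t ∂μ with hgdef
    have hgc : Continuous g := by
      apply continuous_of_dominated (bound := fun t => M * |y t|)
      · intro s
        exact ((hK.comp (continuous_id.prodMk continuous_const)).aestronglyMeasurable.mul
          (Lp.aestronglyMeasurable y))
      · intro s
        filter_upwards with t
        rw [norm_mul, Real.norm_eq_abs, Real.norm_eq_abs]
        exact mul_le_mul_of_nonneg_right (hM0 (t, s)) (abs_nonneg _)
      · exact hy1.abs.const_mul M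
      · filter_upwards with t
        exact (hK.comp (continuous_const.prodMk continuous_id)).mul continuous_const
    have hgb : ∀ s : S, |g s| ≤ M * ∫ t : T, |y t| ∂μ := by
      intro s
      calc |g s| = ‖∫ t : T, K (t, s) * y t ∂μ‖ := rfl
        _ ≤ ∫ t : T, ‖K (t, s) * y t‖ ∂μ := norm_integral_le_integral_norm _
        _ ≤ ∫ t : T, M * |y t| ∂μ := by
            apply integral_mono_of_nonneg (ae_of_all _ fun t => norm_nonneg _)
              (hy1.abs.const_mul M)
            filter_upwards with t
            rw [norm_mul, Real.norm_eq_abs, Real.norm_eq_abs]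
            exact mul_le_mul_of_nonneg_right (hM0 (t, s)) (abs_nonneg _)
        _ = M * ∫ t : T, |y t| ∂μ := integral_const_mul M _
    set φ : S → ℝ := fun s => (Z / d s) * g s with hφdef
    have hφc : Continuous φ := (continuous_const.div hdc hdne).mul hgc
    have hZdb : ∀ s : S, Z / d s ≤ Z / δ := fun s =>
      div_le_div_of_nonneg_left hZpos.le hδpos (hδ s)
    have hZdnn : ∀ s : S, 0 ≤ Z / d s := fun s => div_nonneg hZpos.le (hdpos s).le
    have hφmem : MemLp φ 2 ρ := by
      refine MemLp.mono_exponent ?_ (le_top : (2 : ℝ≥0∞) ≤ ⊤)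
      refine memLp_top_of_bound hφc.aestronglyMeasurable
        ((Z / δ) * (M * ∫ t : T, |y t| ∂μ)) ?_
      filter_upwards with s
      rw [Real.norm_eq_abs, abs_mul, abs_of_nonneg (hZdnn s)]
      exact mul_le_mul (hZdb s) (hgb s) (abs_nonneg _) (div_nonneg hZpos.le hδpos.le)
    -- ν as a density against ρ
    have hwm : Measurable fun s : S => (Z / d s).toNNReal :=
      (measurable_const.div hdc.measurable).real_toNNReal
    have hν : ν = ρ.withDensity fun s : S => ((Z / d s).toNNReal : ℝ≥0∞) := by
      rw [hρ, ← withDensity_mul _ ((hdc.measurable.div_const Z).ennreal_ofReal)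
        (hwm.coe_nnreal_ennreal)]
      have h1 : ((fun s : S => ENNReal.ofReal (d s / Z))
            * fun s : S => ((Z / d s).toNNReal : ℝ≥0∞)) = (1 : S → ℝ≥0∞) := by
        funext s
        simp only [Pi.mul_apply, Pi.one_apply]
        have : ((Z / d s).toNNReal : ℝ≥0∞) = ENNReal.ofReal (Z / d s) := rfl
        rw [this, ← ENNReal.ofReal_mul (div_nonneg (hdpos s).le hZpos.le)]
        have : d s / Z * (Z / d s) = 1 := by
          field_simp [hdne s]
        rw [this, ENNReal.ofReal_one]
      rw [h1, withDensity_one]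
    have hνint : ∀ h : S → ℝ, ∫ s : S, h s ∂ν = ∫ s : S, (Z / d s) * h s ∂ρ := by
      intro h
      rw [hν, integral_withDensity_eq_integral_smul hwm h]
      refine integral_congr_ae (ae_of_all _ fun s => ?_)
      simp only [NNReal.smul_def, smul_eq_mul]
      rw [Real.coe_toNNReal _ (hZdnn s)]
    have key : ∀ ψ : Lp ℝ 2 ρ, ⟪hφmem.toLp φ, ψ⟫
        = ∫ t : T, (∫ s : S, K (t, s) * ψ s ∂ν) * y t ∂μ := by
      intro ψ
      have hψ1 : Integrable (⇑ψ) ρ := (Lp.memLp ψ).integrable one_le_two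
      have hL : ⟪hφmem.toLp φ, ψ⟫ = ∫ s : S, φ s * ψ s ∂ρ := by
        rw [L2.inner_def]
        refine integral_congr_ae ?_
        filter_upwards [hφmem.coeFn_toLp] with s hs
        simp [RCLike.inner_apply, hs, mul_comm]
      have hprod : Integrable
          (Function.uncurry fun (t : T) (s : S) => ((Z / d s) * K (t, s)) * (y t * ψ s))
          (μ.prod ρ) := by
        have : Integrable
            (fun z : T × S => ((Z / d z.2) * K z) * (y z.1 * ψ z.2)) (μ.prod ρ) := by
          refine Integrable.bdd_mul (c := (Z / δ) * M) (hy1.mul_prod hψ1) ?_ ?_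
          · exact ((continuous_const.div (hdc.comp continuous_snd)
              (fun z => hdne z.2)).mul hK).aestronglyMeasurable
          · refine ae_of_all _ fun z => ?_
            rw [norm_mul, Real.norm_eq_abs, Real.norm_eq_abs, abs_of_nonneg (hZdnn z.2)]
            exact mul_le_mul (hZdb z.2) (hM0 z) (abs_nonneg _)
              (div_nonneg hZpos.le hδpos.le)
        refine this.congr (ae_of_all _ fun z => ?_)
        simp [Function.uncurry]
      have step1 : ∫ t : T, (∫ s : S, K (t, s) * ψ s ∂ν) * y t ∂μ
          = ∫ t : T, ∫ s : S, ((Z / d s) * K (t, s)) * (y t * ψ s) ∂ρ ∂μ := by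
        refine integral_congr_ae (ae_of_all _ fun t => ?_)
        show (∫ s : S, K (t, s) * ψ s ∂ν) * y t
          = ∫ s : S, Z / d s * K (t, s) * (y t * ψ s) ∂ρ
        rw [hνint fun s => K (t, s) * ψ s, ← integral_mul_const]
        refine integral_congr_ae (ae_of_all _ fun s => ?_)
        ring
      have step2 : ∫ t : T, ∫ s : S, ((Z / d s) * K (t, s)) * (y t * ψ s) ∂ρ ∂μ
          = ∫ s : S, ∫ t : T, ((Z / d s) * K (t, s)) * (y t * ψ s) ∂μ ∂ρ :=
        integral_integral_swap hprod
      have step3 : ∫ s : S, ∫ t : T, ((Z / d s) * K (t, s)) * (y t * ψ s) ∂μ ∂ρ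
          = ∫ s : S, φ s * ψ s ∂ρ := by
        refine integral_congr_ae (ae_of_all _ fun s => ?_)
        show (∫ t : T, Z / d s * K (t, s) * (y t * ψ s) ∂μ) = φ s * ψ s
        have : ∫ t : T, ((Z / d s) * K (t, s)) * (y t * ψ s) ∂μ
            = ∫ t : T, ((Z / d s) * ψ s) * (K (t, s) * y t) ∂μ := by
          refine integral_congr_ae (ae_of_all _ fun t => ?_)
          ring
        rw [this, integral_const_mul]
        show (Z / d s) * ψ s * g s = φ s * ψ s
        simp only [hφdef]
        ring
      rw [hL, step1, step2, step3]
    exact ⟨hφmem.toLp φ, key, fun φ' h' =>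
      ext_inner_right ℝ fun ψ => (h' ψ).trans (key ψ).symm⟩
  · -- degenerate case Z = 0
    have hν : ν = 0 := by
      have h1 : δ * (ν Set.univ).toReal ≤ Z := by
        rw [hZ]
        calc δ * (ν Set.univ).toReal = ∫ _ : S, δ ∂ν := by rw [integral_const, smul_eq_mul, measureReal_def]; ring
          _ ≤ ∫ s : S, d s ∂ν := integral_mono (integrable_const δ) hdint hδ
      have h2 : (ν Set.univ).toReal = 0 := by
        have := h1.trans_eq hZzero.symm
        nlinarith [ENNReal.toReal_nonneg (a := ν Set.univ)]
      have := (ENNReal.toReal_eq_zero_iff _).mp h2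
      rcases this with h | h
      · exact Measure.measure_univ_eq_zero.mp h
      · exact absurd h (measure_ne_top ν _)
    refine ⟨0, fun ψ => ?_, fun φ' h' => ext_inner_right ℝ fun ψ => (h' ψ).trans ?_⟩
    · rw [hν]
      simp
    · rw [hν]
      simp
end

section
/- Let θ > 0, let s ∈ {0,1}, let k ∈ {2,3}, and let α ∈ ℝ be such that γ := (α − 1/θ)/(1 + s) satisfies 0 < γ < k. For i ≥ 1 set λ_i = i^{-θ}. Then lim_{λ→0⁺} (1+s) θ λ^{k−γ} ∑_{i=1}^∞ (λ_i^{1+s} + λ)^{-k} λ_i^{α} = Γ(γ) Γ(k − γ)/Γ(k); equivalently, ∑_{i=1}^∞ (i^{-(1+s)θ} + λ)^{-k} i^{-θα} = (1/((1+s)θ)) λ^{γ−k} ( Γ(γ)Γ(k−γ)/Γ(k) + o(1) ) as λ → 0⁺, where Γ is the Gamma function. -/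
open Filter MeasureTheory Set

lemma realBeta (a b : ℝ) (ha : 0 < a) (hb : 0 < b) :
    ∫ t in Set.Ioo (0:ℝ) 1, t ^ (a-1) * (1-t) ^ (b-1) =
      Real.Gamma a * Real.Gamma b / Real.Gamma (a+b) := by
  have hab : (0:ℝ) < a + b := by linarith
  have hBeta : Complex.betaIntegral a b
      = ((∫ t in (0:ℝ)..1, t ^ (a-1) * (1-t) ^ (b-1) : ℝ) : ℂ) := by
    rw [Complex.betaIntegral, ← intervalIntegral.integral_ofReal]
    apply intervalIntegral.integral_congr
    intro x hx
    rw [Set.uIcc_of_le (by norm_num : (0:ℝ) ≤ 1)] at hx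
    push_cast
    rw [Complex.ofReal_cpow hx.1, Complex.ofReal_cpow (by linarith [hx.2] : (0:ℝ) ≤ 1 - x)]
    push_cast
    ring
  have hG := Complex.Gamma_mul_Gamma_eq_betaIntegral
    (s := (a:ℂ)) (t := (b:ℂ)) (by simpa using ha) (by simpa using hb)
  rw [hBeta] at hG
  have hcast : ((a:ℂ) + b) = ((a + b : ℝ) : ℂ) := by push_cast; ring
  rw [hcast, Complex.Gamma_ofReal, Complex.Gamma_ofReal, Complex.Gamma_ofReal] at hG
  have hre : Real.Gamma a * Real.Gamma b
      = Real.Gamma (a+b) * ∫ t in (0:ℝ)..1, t ^ (a-1) * (1-t) ^ (b-1) := by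
    exact_mod_cast hG
  have hGab : Real.Gamma (a+b) ≠ 0 := (Real.Gamma_pos_of_pos hab).ne'
  rw [intervalIntegral.integral_of_le (by norm_num : (0:ℝ) ≤ 1),
    MeasureTheory.integral_Ioc_eq_integral_Ioo] at hre
  field_simp
  linarith [hre]

lemma betaIoi (a b β : ℝ) (ha : 0 < a) (hb : 0 < b) (hβ : 0 < β) :
    ∫ y in Set.Ioi (0:ℝ), β * y ^ (β*a-1) * (1+y^β) ^ (-(a+b)) =
      Real.Gamma a * Real.Gamma b / Real.Gamma (a+b) := by
  set g : ℝ → ℝ := fun y => β * y ^ (β*a-1) * (1+y^β) ^ (-(a+b)) with hg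
  set f : ℝ → ℝ := fun t => (t/(1-t)) ^ β⁻¹ with hf
  set f' : ℝ → ℝ := fun t => β⁻¹ * (t/(1-t)) ^ (β⁻¹-1) / (1-t)^2 with hf'
  have himg : f '' Set.Ioo 0 1 = Set.Ioi (0:ℝ) := by
    ext y; constructor
    · rintro ⟨t, ht, rfl⟩
      exact Real.rpow_pos_of_pos (div_pos ht.1 (by linarith [ht.2])) _
    · intro hy
      have hy' : (0:ℝ) < y := hy
      have hyβ : (0:ℝ) < y ^ β := Real.rpow_pos_of_pos hy' β
      have h1 : (0:ℝ) < 1 + y^β := by positivity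
      refine ⟨y^β/(1+y^β), ⟨by positivity, ?_⟩, ?_⟩
      · rw [div_lt_one h1]; linarith
      · have hq : y^β/(1+y^β) / (1 - y^β/(1+y^β)) = y^β := by
          field_simp; ring
        show (y^β/(1+y^β) / (1 - y^β/(1+y^β))) ^ β⁻¹ = y
        rw [hq, Real.rpow_rpow_inv hy'.le hβ.ne']
  have hinj : Set.InjOn f (Set.Ioo 0 1) := by
    apply StrictMonoOn.injOn
    intro t1 h1 t2 h2 hlt
    have hc1 : (0:ℝ) < 1 - t1 := by linarith [h1.2]
    have hc2 : (0:ℝ) < 1 - t2 := by linarith [h2.2]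
    have : t1/(1-t1) < t2/(1-t2) := by
      rw [div_lt_div_iff₀ hc1 hc2]; nlinarith [h1.1, h2.1]
    exact Real.rpow_lt_rpow (div_nonneg h1.1.le hc1.le) this (by positivity)
  have hderiv : ∀ t ∈ Set.Ioo (0:ℝ) 1, HasDerivWithinAt f (f' t) (Set.Ioo 0 1) t := by
    intro t ht
    have hc : (0:ℝ) < 1 - t := by linarith [ht.2]
    have hu : 0 < t/(1-t) := div_pos ht.1 hc
    have hd : HasDerivAt (fun t : ℝ => t/(1-t)) ((1*(1-t) - t*(0-1))/(1-t)^2) t :=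
      (hasDerivAt_id t).div ((hasDerivAt_const t (1:ℝ)).sub (hasDerivAt_id t)) hc.ne'
    have h2 := hd.rpow_const (p := β⁻¹) (Or.inl hu.ne')
    have h3 : (1*(1-t) - t*(0-1))/(1-t)^2 * β⁻¹ * (t/(1-t)) ^ (β⁻¹-1) = f' t := by
      rw [hf']; ring
    rw [h3] at h2
    exact h2.hasDerivWithinAt
  have key : Set.EqOn (fun t => |f' t| • g (f t)) (fun t => t^(a-1) * (1-t)^(b-1))
      (Set.Ioo (0:ℝ) 1) := by
    intro t ht
    have ht0 : (0:ℝ) < t := ht.1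
    have hc : (0:ℝ) < 1 - t := by linarith [ht.2]
    have hu : 0 < t/(1-t) := div_pos ht0 hc
    have habs : |f' t| = β⁻¹ * (t/(1-t)) ^ (β⁻¹-1) / (1-t)^2 := by
      rw [hf']
      exact abs_of_pos (by positivity)
    have hfuβ : (f t) ^ β = t/(1-t) := by
      rw [hf]; exact Real.rpow_inv_rpow hu.le hβ.ne'
    have h1u : 1 + t/(1-t) = (1-t)⁻¹ := by field_simp; ring
    have hfu : (f t) ^ (β*a-1) = (t/(1-t)) ^ (β⁻¹*(β*a-1)) := by
      rw [hf, ← Real.rpow_mul hu.le]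
    simp only [smul_eq_mul, hg, habs, hfuβ, hfu, h1u]
    rw [Real.inv_rpow hc.le, Real.rpow_neg hc.le, inv_inv]
    rw [Real.div_rpow ht0.le hc.le, Real.div_rpow ht0.le hc.le]
    have hβ1 : β⁻¹ * (β*a-1) = a - β⁻¹ := by field_simp
    rw [hβ1]
    have hcne : ∀ x:ℝ, (1-t)^x ≠ 0 := fun x => (Real.rpow_pos_of_pos hc x).ne'
    field_simp
    rw [show ((1:ℝ)-t)^2 = (1-t)^((2:ℝ)) from by rw [← Real.rpow_natCast (1-t) 2]; norm_num]
    simp only [Real.rpow_def_of_pos ht0, Real.rpow_def_of_pos hc]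
    simp only [← Real.exp_add, mul_assoc, mul_left_comm, mul_comm]
    congr 1
    field_simp
    ring
  calc ∫ y in Set.Ioi (0:ℝ), g y = ∫ y in f '' Set.Ioo 0 1, g y := by rw [himg]
    _ = ∫ t in Set.Ioo (0:ℝ) 1, |f' t| • g (f t) :=
        integral_image_eq_integral_abs_deriv_smul measurableSet_Ioo hderiv hinj g
    _ = ∫ t in Set.Ioo (0:ℝ) 1, t^(a-1) * (1-t)^(b-1) :=
        setIntegral_congr_fun measurableSet_Ioo key
    _ = _ := realBeta a b ha hb

lemma step_sum (T : ℕ → ℝ) (hInt : IntegrableOn (fun x => T ⌈x⌉₊) (Set.Ioi (0:ℝ))) :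
    ∫ x in Set.Ioi (0:ℝ), T ⌈x⌉₊ = ∑' n : ℕ, T (n+1) := by
  have hUnion : (⋃ n : ℕ, Set.Ioc (n:ℝ) (n+1)) = Set.Ioi 0 := by
    ext x
    simp only [Set.mem_iUnion, Set.mem_Ioc, Set.mem_Ioi]
    constructor
    · rintro ⟨n, hn, -⟩
      exact lt_of_le_of_lt (by positivity) hn
    · intro hx
      have h1 : 1 ≤ ⌈x⌉₊ := Nat.one_le_ceil_iff.mpr hx
      refine ⟨⌈x⌉₊ - 1, ?_, ?_⟩
      · have : ((⌈x⌉₊ - 1 : ℕ) : ℝ) = (⌈x⌉₊ : ℝ) - 1 := by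
          push_cast [Nat.cast_sub h1]; ring
        rw [this]
        linarith [Nat.ceil_lt_add_one hx.le]
      · have : ((⌈x⌉₊ - 1 : ℕ) : ℝ) + 1 = (⌈x⌉₊ : ℝ) := by
          push_cast [Nat.cast_sub h1]; ring
        rw [this]
        exact Nat.le_ceil x
  have hdisj : Pairwise (Function.onFun Disjoint fun n : ℕ => Set.Ioc (n:ℝ) (n+1)) := by
    intro m n hmn
    apply Set.Ioc_disjoint_Ioc.mpr
    rcases hmn.lt_or_gt with h | h
    · have : (m:ℝ) + 1 ≤ n := by exact_mod_cast Nat.succ_le_of_lt h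
      exact min_le_of_left_le (le_max_of_le_right this)
    · have : (n:ℝ) + 1 ≤ m := by exact_mod_cast Nat.succ_le_of_lt h
      exact min_le_of_right_le (le_max_of_le_left this)
  rw [← hUnion] at hInt ⊢
  rw [MeasureTheory.integral_iUnion (fun n => measurableSet_Ioc) hdisj hInt]
  apply tsum_congr
  intro n
  have hceil : Set.EqOn (fun x => T ⌈x⌉₊) (fun _ => T (n+1)) (Set.Ioc (n:ℝ) (n+1)) := by
    intro x hx
    have : ⌈x⌉₊ = n + 1 := by
      rw [Nat.ceil_eq_iff (Nat.succ_ne_zero n)]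
      constructor
      · simpa using hx.1
      · exact_mod_cast hx.2
    simp [this]
  rw [setIntegral_congr_fun measurableSet_Ioc hceil, setIntegral_const]
  simp [Real.volume_Ioc]

lemma key_alg (β γ l w : ℝ) (k : ℕ) (hβ : 0 < β) (hl : 0 < l) (hw : 0 < w) :
    β * l^((k:ℝ)-γ) * l^(-β⁻¹) * ((l^(-β⁻¹)*w)^(-(β*γ+1)) / ((l^(-β⁻¹)*w)^(-β)+l)^k)
      = β * (w^(β*((k:ℝ)-γ)-1) * ((1+w^β)^k)⁻¹) := by
  have hl1 : (0:ℝ) < l^(-β⁻¹) := Real.rpow_pos_of_pos hl _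
  have hCβ : (l^(-β⁻¹)*w)^(-β) = l * w^(-β) := by
    rw [Real.mul_rpow hl1.le hw.le, ← Real.rpow_mul hl.le]
    rw [show -β⁻¹ * -β = 1 by field_simp, Real.rpow_one]
  have hC : (l^(-β⁻¹)*w)^(-(β*γ+1)) = l^(β⁻¹*(β*γ+1)) * w^(-(β*γ+1)) := by
    rw [Real.mul_rpow hl1.le hw.le, ← Real.rpow_mul hl.le]
    rw [show -β⁻¹ * -(β*γ+1) = β⁻¹*(β*γ+1) by ring]
  have hwsplit : w^(-β) + 1 = w^(-β) * (1 + w^β) := by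
    rw [mul_add, ← Real.rpow_add hw, mul_one]
    norm_num
  rw [hCβ, hC, show l * w^(-β) + l = l * (w^(-β) + 1) by ring, hwsplit, ← mul_assoc, mul_pow,
    mul_pow]
  rw [show l^k = l^((k:ℝ)) from (Real.rpow_natCast l k).symm,
    show (w^(-β))^k = w^(-β*(k:ℝ)) from by rw [← Real.rpow_natCast (w^(-β)) k,
      ← Real.rpow_mul hw.le],
    show (1+w^β)^k = Real.exp ((k:ℝ) * Real.log (1+w^β)) from by
      rw [Real.exp_nat_mul, Real.exp_log (show (0:ℝ) < 1+w^β by positivity)]]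
  simp only [Real.rpow_def_of_pos hl, Real.rpow_def_of_pos hw]
  rw [div_eq_mul_inv, mul_inv, mul_inv]
  simp only [← Real.exp_neg, ← Real.exp_add, mul_assoc, mul_left_comm, mul_comm]
  rw [mul_right_inj' hβ.ne', Real.exp_eq_exp]
  field_simp
  ring

lemma h_meas_aux (c β : ℝ) (k : ℕ) : Measurable (fun w : ℝ => w ^ c * ((1+w^β)^k)⁻¹) := by
  fun_prop

/-- Gamma-function asymptotics of the series `F_s(λ, α, k) = ∑_{i≥1} (λᵢ^{1+s} + λ)^{-k} λᵢ^α`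
for the polynomially decaying spectrum `λᵢ = i^{-θ}`: as `λ → 0⁺`,
`(1+s) θ λ^{k−γ} F_s(λ, α, k) → Γ(γ)Γ(k−γ)/Γ(k)` where `γ = (α − 1/θ)/(1+s)`. -/
theorem power_spectrum_series_gamma_asymptotics
    (θ : ℝ) (hθ : 0 < θ) (s k : ℕ) (hs : s = 0 ∨ s = 1) (hk : k = 2 ∨ k = 3)
    (α γ : ℝ) (hγ : γ = (α - 1 / θ) / (1 + (s : ℝ)))
    (hγ_pos : 0 < γ) (hγ_lt : γ < (k : ℝ)) :
    Tendsto
      (fun l : ℝ => (1 + (s : ℝ)) * θ * l ^ ((k : ℝ) - γ) *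
        ∑' i : ℕ, ((i : ℝ) + 1) ^ (-(θ * α)) /
          (((i : ℝ) + 1) ^ (-((1 + (s : ℝ)) * θ)) + l) ^ k)
      (nhdsWithin 0 (Set.Ioi 0))
      (nhds (Real.Gamma γ * Real.Gamma ((k : ℝ) - γ) / Real.Gamma (k : ℝ))) := by
  have hs1 : (0:ℝ) < 1 + (s:ℝ) := by positivity
  set β : ℝ := (1 + (s:ℝ)) * θ with hβdef
  have hβ : 0 < β := by positivity
  have hkγ : 0 < (k:ℝ) - γ := by linarith
  have hθα : θ * α = β * γ + 1 := by
    have h1 : γ * (1+(s:ℝ)) = α - 1/θ := by rw [hγ]; field_simp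
    have h2 : θ * (γ * (1+(s:ℝ))) = θ * α - 1 := by
      rw [h1]; field_simp
    rw [hβdef]; linear_combination -h2
  have hθα1 : 1 < θ * α := by nlinarith [mul_pos hβ hγ_pos]
  set h : ℝ → ℝ := fun w => w ^ (β*((k:ℝ)-γ)-1) * ((1+w^β)^k)⁻¹ with hh
  set φ : ℝ → ℝ → ℝ := fun l y => l^(β⁻¹) * (⌈l^(-β⁻¹) * y⌉₊ : ℝ) with hφ
  -- basic facts about φ
  have hφfacts : ∀ l : ℝ, 0 < l → ∀ y : ℝ, 0 < y →
      (0:ℝ) < φ l y ∧ y ≤ φ l y ∧ φ l y ≤ y + l^(β⁻¹) := by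
    intro l hl y hy
    have hl1 : (0:ℝ) < l^(β⁻¹) := Real.rpow_pos_of_pos hl _
    have hl2 : (0:ℝ) < l^(-β⁻¹) := Real.rpow_pos_of_pos hl _
    have hz : (0:ℝ) < l^(-β⁻¹) * y := by positivity
    have hcancel : l^(β⁻¹) * l^(-β⁻¹) = 1 := by
      rw [← Real.rpow_add hl]; simp
    have hmem : (0:ℝ) < (⌈l^(-β⁻¹) * y⌉₊ : ℝ) := by
      exact_mod_cast Nat.one_le_ceil_iff.mpr hz
    refine ⟨mul_pos hl1 hmem, ?_, ?_⟩
    · calc y = l^(β⁻¹) * (l^(-β⁻¹) * y) := by rw [← mul_assoc, hcancel, one_mul]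
        _ ≤ φ l y := mul_le_mul_of_nonneg_left (Nat.le_ceil _) hl1.le
    · calc φ l y ≤ l^(β⁻¹) * (l^(-β⁻¹)*y + 1) :=
            mul_le_mul_of_nonneg_left (Nat.ceil_lt_add_one hz.le).le hl1.le
        _ = y + l^(β⁻¹) := by rw [mul_add, ← mul_assoc, hcancel]; ring
  -- Step A : identification of the prelimit expression with an integral
  have stepA : ∀ l ∈ Set.Ioi (0:ℝ),
      β * l ^ ((k:ℝ) - γ) * (∑' i : ℕ, ((i:ℝ)+1) ^ (-(θ*α)) / (((i:ℝ)+1) ^ (-β) + l)^k)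
        = ∫ y in Set.Ioi (0:ℝ), β * h (φ l y) := by
    intro l hl
    have hl : (0:ℝ) < l := hl
    set T : ℕ → ℝ := fun n => (n:ℝ)^(-(θ*α)) / ((n:ℝ)^(-β)+l)^k with hT
    have hmeasT : Measurable fun x : ℝ => T ⌈x⌉₊ :=
      (measurable_from_nat (f := T)).comp Nat.measurable_ceil
    have hIntT : IntegrableOn (fun x => T ⌈x⌉₊) (Set.Ioi (0:ℝ)) := by
      rw [← Set.Ioc_union_Ioi_eq_Ioi (zero_le_one (α := ℝ))]
      apply MeasureTheory.IntegrableOn.union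
      · have heq : Set.EqOn (fun x => T ⌈x⌉₊) (fun _ => T 1) (Set.Ioc (0:ℝ) 1) := by
          intro x hx
          have : ⌈x⌉₊ = 1 := by
            rw [Nat.ceil_eq_iff one_ne_zero]
            exact ⟨by simpa using hx.1, by exact_mod_cast hx.2⟩
          simp [this]
        rw [integrableOn_congr_fun heq measurableSet_Ioc]
        apply (integrableOn_const_iff).mpr
        exact Or.inr measure_Ioc_lt_top
      · apply MeasureTheory.Integrable.mono'
          (((integrableOn_Ioi_rpow_of_lt (show -(θ*α) < -1 by linarith) zero_lt_one).const_mul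
            ((l^k)⁻¹)))
          (hmeasT.aestronglyMeasurable)
        rw [ae_restrict_iff' measurableSet_Ioi]
        apply ae_of_all
        intro x hx
        have hx1 : (1:ℝ) < x := hx
        have hx0 : (0:ℝ) < x := by linarith
        have hxC : x ≤ (⌈x⌉₊:ℝ) := Nat.le_ceil x
        have hC0 : (0:ℝ) < (⌈x⌉₊:ℝ) := by linarith
        have hnum : (⌈x⌉₊:ℝ)^(-(θ*α)) ≤ x^(-(θ*α)) :=
          Real.rpow_le_rpow_of_nonpos hx0 hxC (by linarith)
        have hden : l^k ≤ ((⌈x⌉₊:ℝ)^(-β)+l)^k :=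
          pow_le_pow_left₀ hl.le (le_add_of_nonneg_left (Real.rpow_nonneg hC0.le _)) k
        have hTnn : 0 ≤ T ⌈x⌉₊ := by
          rw [hT]
          positivity
        rw [Real.norm_eq_abs, abs_of_nonneg hTnn, hT]
        calc (⌈x⌉₊:ℝ)^(-(θ*α)) / ((⌈x⌉₊:ℝ)^(-β)+l)^k ≤ x^(-(θ*α)) / l^k :=
              div_le_div₀ (Real.rpow_nonneg hx0.le _) hnum (by positivity) hden
          _ = (l^k)⁻¹ * x^(-(θ*α)) := by ring
    have hsum : (∑' i : ℕ, ((i:ℝ)+1) ^ (-(θ*α)) / (((i:ℝ)+1) ^ (-β) + l)^k)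
        = ∑' n : ℕ, T (n+1) := by
      apply tsum_congr
      intro n
      rw [hT]
      push_cast
      ring_nf
    rw [hsum, ← step_sum T hIntT]
    have hb : (0:ℝ) < l^(-β⁻¹) := Real.rpow_pos_of_pos hl _
    have hscale := MeasureTheory.integral_comp_mul_left_Ioi (fun x => T ⌈x⌉₊) 0 hb
    rw [mul_zero] at hscale
    have h2 : ∫ x in Set.Ioi (0:ℝ), T ⌈x⌉₊
        = l^(-β⁻¹) * ∫ y in Set.Ioi (0:ℝ), T ⌈l^(-β⁻¹) * y⌉₊ := by
      rw [hscale, smul_eq_mul, ← mul_assoc, mul_inv_cancel₀ hb.ne', one_mul]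
    rw [h2, show β * l^((k:ℝ)-γ) * (l^(-β⁻¹) * ∫ y in Set.Ioi (0:ℝ), T ⌈l^(-β⁻¹) * y⌉₊)
        = ∫ y in Set.Ioi (0:ℝ), (β * l^((k:ℝ)-γ) * l^(-β⁻¹)) * T ⌈l^(-β⁻¹) * y⌉₊ from by
      rw [MeasureTheory.integral_const_mul]; ring]
    apply setIntegral_congr_fun measurableSet_Ioi
    intro y hy
    have hy : (0:ℝ) < y := hy
    obtain ⟨hw0, hw1, hw2⟩ := hφfacts l hl y hy
    have hcancel : l^(-β⁻¹) * l^(β⁻¹) = 1 := by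
      rw [← Real.rpow_add hl]; simp
    have hCw : ((⌈l^(-β⁻¹) * y⌉₊ : ℕ):ℝ) = l^(-β⁻¹) * φ l y := by
      rw [hφ]
      rw [← mul_assoc, hcancel, one_mul]
    show (β * l^((k:ℝ)-γ) * l^(-β⁻¹)) * T ⌈l^(-β⁻¹) * y⌉₊ = β * h (φ l y)
    simp only [hT]
    rw [hCw, show -(θ*α) = -(β*γ+1) by rw [hθα]]
    calc (β * l^((k:ℝ)-γ) * l^(-β⁻¹)) *
          ((l^(-β⁻¹) * φ l y)^(-(β*γ+1)) / ((l^(-β⁻¹) * φ l y)^(-β)+l)^k)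
        = β * l^((k:ℝ)-γ) * l^(-β⁻¹) *
          ((l^(-β⁻¹) * φ l y)^(-(β*γ+1)) / ((l^(-β⁻¹) * φ l y)^(-β)+l)^k) := by ring
      _ = β * (( φ l y)^(β*((k:ℝ)-γ)-1) * ((1+(φ l y)^β)^k)⁻¹) := key_alg β γ l (φ l y) k hβ hl hw0
      _ = β * h (φ l y) := by rw [hh]
  -- the limiting integral
  have hlimint : ∫ y in Set.Ioi (0:ℝ), β * h y
      = Real.Gamma γ * Real.Gamma ((k:ℝ)-γ) / Real.Gamma (k:ℝ) := by
    have hBI := betaIoi ((k:ℝ)-γ) γ β hkγ hγ_pos hβ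
    rw [show ((k:ℝ)-γ) + γ = (k:ℝ) by ring] at hBI
    rw [show Real.Gamma γ * Real.Gamma ((k:ℝ)-γ) = Real.Gamma ((k:ℝ)-γ) * Real.Gamma γ from
      mul_comm _ _, ← hBI]
    apply setIntegral_congr_fun measurableSet_Ioi
    intro y hy
    have hy : (0:ℝ) < y := hy
    have hpos : (0:ℝ) < 1 + y^β := by positivity
    simp only [hh]
    rw [Real.rpow_neg hpos.le, Real.rpow_natCast]
    ring
  apply Tendsto.congr' (f₁ := fun l : ℝ => ∫ y in Set.Ioi (0:ℝ), β * h (φ l y))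
  · filter_upwards [self_mem_nhdsWithin] with l hl
    exact (stepA l hl).symm
  · rw [← hlimint]
    set p : ℝ := β*((k:ℝ)-γ)-1 with hp
    set D : ℝ → ℝ := fun y => β * (if y ≤ 1 then y^p + 2^p else y^(-(β*γ)-1)) with hD
    apply MeasureTheory.tendsto_integral_filter_of_dominated_convergence D
    · -- measurability
      apply Eventually.of_forall
      intro l
      apply Measurable.aestronglyMeasurable
      have hhm : Measurable h := by rw [hh]; exact h_meas_aux _ _ _
      have hφm : Measurable (φ l) := by
        rw [hφ]
        apply Measurable.const_mul
        exact (measurable_from_nat (f := (Nat.cast : ℕ → ℝ))).comp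
          (Nat.measurable_ceil.comp (measurable_id.const_mul _))
      exact measurable_const.mul (hhm.comp hφm)
    · -- domination
      filter_upwards [Ioo_mem_nhdsGT_of_mem (Set.mem_Ico.mpr ⟨le_refl (0:ℝ), zero_lt_one⟩)]
        with l hl
      rw [ae_restrict_iff' measurableSet_Ioi]
      apply ae_of_all
      intro y hy
      have hy : (0:ℝ) < y := hy
      obtain ⟨hw0, hw1, hw2⟩ := hφfacts l hl.1 y hy
      have hw2' : φ l y ≤ y + 1 := by
        have hle1 : l^(β⁻¹) ≤ 1 := Real.rpow_le_one hl.1.le hl.2.le (by positivity)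
        linarith
      set w := φ l y with hwdef
      have h1wβ : (0:ℝ) < w^β := Real.rpow_pos_of_pos hw0 β
      have hA1 : (1:ℝ) ≤ (1+w^β)^k := one_le_pow₀ (by linarith)
      have hnn : 0 ≤ β * h w := by
        have : 0 ≤ h w := by rw [hh]; positivity
        positivity
      rw [Real.norm_eq_abs, abs_of_nonneg hnn]
      simp only [hD]
      rcases le_or_gt y 1 with hy1 | hy1
      · rw [if_pos hy1]
        apply mul_le_mul_of_nonneg_left _ hβ.le
        have hhw : h w ≤ w^p := by
          rw [hh]
          exact mul_le_of_le_one_right (Real.rpow_nonneg hw0.le _) (inv_le_one_of_one_le₀ hA1)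
        refine le_trans hhw ?_
        rcases le_or_gt 0 p with hp0 | hp0
        · have hw2p : w^p ≤ 2^p := Real.rpow_le_rpow hw0.le (by linarith) hp0
          have h2 : (0:ℝ) ≤ y^p := Real.rpow_nonneg hy.le _
          linarith
        · have hwyp : w^p ≤ y^p := Real.rpow_le_rpow_of_nonpos hy hw1 hp0.le
          have h2 : (0:ℝ) ≤ (2:ℝ)^p := Real.rpow_nonneg (by norm_num) _
          linarith
      · rw [if_neg (not_le.mpr hy1)]
        apply mul_le_mul_of_nonneg_left _ hβ.le
        have hstep : h w ≤ w^(-(β*γ)-1) := by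
          rw [hh]
          have hb1 : ((w^β)^k : ℝ) ≤ (1+w^β)^k :=
            pow_le_pow_left₀ h1wβ.le (by linarith) k
          have hinv : ((1+w^β)^k)⁻¹ ≤ ((w^β)^k)⁻¹ :=
            inv_anti₀ (by positivity) hb1
          calc w^p * ((1+w^β)^k)⁻¹ ≤ w^p * ((w^β)^k)⁻¹ :=
                mul_le_mul_of_nonneg_left hinv (Real.rpow_nonneg hw0.le _)
            _ = w^(-(β*γ)-1) := by
                rw [← Real.rpow_natCast (w^β) k, ← Real.rpow_mul hw0.le,
                  ← Real.rpow_neg hw0.le, ← Real.rpow_add hw0]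
                congr 1
                rw [hp]
                ring
        refine le_trans hstep ?_
        exact Real.rpow_le_rpow_of_nonpos hy hw1 (by nlinarith [mul_pos hβ hγ_pos])
    · -- integrability of the dominating function
      have hp1 : (-1:ℝ) < p := by rw [hp]; nlinarith [mul_pos hβ hkγ]
      have hI1 : IntegrableOn D (Set.Ioc (0:ℝ) 1) := by
        rw [integrableOn_congr_fun (g := fun y : ℝ => β * (y^p + 2^p))
          (fun y hy => by simp only [hD]; rw [if_pos hy.2]) measurableSet_Ioc]
        apply Integrable.const_mul
        apply Integrable.add
        · exact (intervalIntegral.intervalIntegrable_rpow' hp1).1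
        · exact (integrableOn_const_iff).mpr (Or.inr measure_Ioc_lt_top)
      have hI2 : IntegrableOn D (Set.Ioi (1:ℝ)) := by
        rw [integrableOn_congr_fun (g := fun y : ℝ => β * y^(-(β*γ)-1))
          (fun y hy => by simp only [hD]; rw [if_neg (not_le.mpr hy)]) measurableSet_Ioi]
        exact ((integrableOn_Ioi_rpow_of_lt (by nlinarith [mul_pos hβ hγ_pos])
          zero_lt_one).const_mul β)
      have hU := hI1.union hI2
      rwa [Set.Ioc_union_Ioi_eq_Ioi zero_le_one] at hU
    · -- pointwise limit
      rw [ae_restrict_iff' measurableSet_Ioi]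
      apply ae_of_all
      intro y hy
      have hy : (0:ℝ) < y := hy
      have hφlim : Tendsto (fun l => φ l y) (nhdsWithin 0 (Set.Ioi 0)) (nhds y) := by
        have h0 : Tendsto (fun l : ℝ => l^(β⁻¹)) (nhdsWithin 0 (Set.Ioi 0)) (nhds 0) := by
          have hc := (Real.continuousAt_rpow_const 0 β⁻¹ (Or.inr (by positivity))).tendsto
          rw [Real.zero_rpow (by positivity : β⁻¹ ≠ 0)] at hc
          exact hc.mono_left nhdsWithin_le_nhds
        have hupper : Tendsto (fun l : ℝ => y + l^(β⁻¹)) (nhdsWithin 0 (Set.Ioi 0)) (nhds y) := by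
          simpa using tendsto_const_nhds.add h0
        apply tendsto_of_tendsto_of_tendsto_of_le_of_le' tendsto_const_nhds hupper
        · filter_upwards [self_mem_nhdsWithin] with l hl
          exact (hφfacts l hl y hy).2.1
        · filter_upwards [self_mem_nhdsWithin] with l hl
          exact (hφfacts l hl y hy).2.2
      have hcont : ContinuousAt h y := by
        rw [hh]
        apply ContinuousAt.mul
        · exact Real.continuousAt_rpow_const y _ (Or.inl hy.ne')
        · apply ContinuousAt.inv₀
          · exact (continuousAt_const.add (Real.continuousAt_rpow_const y _ (Or.inl hy.ne'))).pow k
          · have : (0:ℝ) < 1 + y^β := by positivity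
            positivity
      exact tendsto_const_nhds.mul (hcont.tendsto.comp hφlim)
end
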